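/- arXiv:2507.14881 — 6 statements merged into one kernel-verified Lean document; each statement's English description precedes it below -/
import Mathlib

section
/- Let d ≥ 1, let H : ℝ^d × ℝ^d → ℝ be continuously differentiable, and let q, p, δq, δp : [t_a, t_b] → ℝ^d be continuously differentiable curves. Define the varied action S(ε) = ∫_{t_a}^{t_b} [(p(t) + ε δp(t))ᵀ (q̇(t) + ε δq̇(t)) − H(q(t) + ε δq(t), p(t) + ε δp(t))] dt. Then S is differentiable at ε = 0 and S'(0) = ∫_{t_a}^{t_b} δq(t)ᵀ (−ṗ(t) − ∇_q H(q(t), p(t))) dt + ∫_{t_a}^{t_b} δp(t)ᵀ (q̇(t) − ∇_p H(q(t), p(t))) dt + p(t_b)ᵀ δq(t_b) − p(t_a)ᵀ δq(t_a). -/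
open MeasureTheory intervalIntegral Set
open scoped RealInnerProductSpace

private lemma fderiv_pair_eq_grads (d : ℕ)
    (H : EuclideanSpace ℝ (Fin d) × EuclideanSpace ℝ (Fin d) → ℝ)
    (hH : ContDiff ℝ 1 H) (qt pt v w : EuclideanSpace ℝ (Fin d)) :
    (fderiv ℝ H (qt, pt)) (v, w)
      = ⟪v, gradient (fun x => H (x, pt)) qt⟫ + ⟪w, gradient (fun y => H (qt, y)) pt⟫ := by
  have hHd : Differentiable ℝ H := hH.differentiable one_ne_zero
  have hq1 : HasFDerivAt (fun x => H (x, pt))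
      ((fderiv ℝ H (qt, pt)).comp (ContinuousLinearMap.inl ℝ _ _)) qt :=
    (hHd (qt, pt)).hasFDerivAt.comp qt (hasFDerivAt_prodMk_left qt pt)
  have hq2 : HasFDerivAt (fun y => H (qt, y))
      ((fderiv ℝ H (qt, pt)).comp (ContinuousLinearMap.inr ℝ _ _)) pt :=
    (hHd (qt, pt)).hasFDerivAt.comp pt (hasFDerivAt_prodMk_right qt pt)
  have e1 : gradient (fun x => H (x, pt)) qt
      = (InnerProductSpace.toDual ℝ _).symm
          ((fderiv ℝ H (qt, pt)).comp (ContinuousLinearMap.inl ℝ _ _)) :=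
    hq1.hasGradientAt.differentiableAt.hasGradientAt.unique hq1.hasGradientAt
  have e2 : gradient (fun y => H (qt, y)) pt
      = (InnerProductSpace.toDual ℝ _).symm
          ((fderiv ℝ H (qt, pt)).comp (ContinuousLinearMap.inr ℝ _ _)) :=
    hq2.hasGradientAt.differentiableAt.hasGradientAt.unique hq2.hasGradientAt
  have key : ((v, w) : EuclideanSpace ℝ (Fin d) × EuclideanSpace ℝ (Fin d))
      = (v, 0) + (0, w) := by simp
  rw [key, map_add, e1, e2]
  rw [real_inner_comm (y := v), real_inner_comm (y := w),
    InnerProductSpace.toDual_symm_apply, InnerProductSpace.toDual_symm_apply]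
  simp

/-- For a C¹ Hamiltonian `H` on `ℝ^d × ℝ^d` and C¹ curves
`q, p, δq, δp : [t_a, t_b] → ℝ^d` (with continuous derivatives `q', p', δq', δp'`),
the varied action `S(ε)` is differentiable at `ε = 0` with the stated derivative. -/
theorem first_variation_of_action
    (d : ℕ) (hd : 1 ≤ d)
    (H : EuclideanSpace ℝ (Fin d) × EuclideanSpace ℝ (Fin d) → ℝ)
    (hH : ContDiff ℝ 1 H)
    (ta tb : ℝ) (htab : ta ≤ tb)
    (q p δq δp q' p' δq' δp' : ℝ → EuclideanSpace ℝ (Fin d))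
    (hq : ∀ t ∈ Icc ta tb, HasDerivWithinAt q (q' t) (Icc ta tb) t)
    (hp : ∀ t ∈ Icc ta tb, HasDerivWithinAt p (p' t) (Icc ta tb) t)
    (hδq : ∀ t ∈ Icc ta tb, HasDerivWithinAt δq (δq' t) (Icc ta tb) t)
    (hδp : ∀ t ∈ Icc ta tb, HasDerivWithinAt δp (δp' t) (Icc ta tb) t)
    (hq' : ContinuousOn q' (Icc ta tb))
    (hp' : ContinuousOn p' (Icc ta tb))
    (hδq' : ContinuousOn δq' (Icc ta tb))
    (hδp' : ContinuousOn δp' (Icc ta tb))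
    (S : ℝ → ℝ)
    (hS : ∀ ε : ℝ, S ε = ∫ t in ta..tb,
      (⟪p t + ε • δp t, q' t + ε • δq' t⟫
        - H (q t + ε • δq t, p t + ε • δp t))) :
    HasDerivAt S
      ((∫ t in ta..tb,
          ⟪δq t, -p' t - gradient (fun x => H (x, p t)) (q t)⟫)
        + (∫ t in ta..tb,
          ⟪δp t, q' t - gradient (fun y => H (q t, y)) (p t)⟫)
        + ⟪p tb, δq tb⟫ - ⟪p ta, δq ta⟫) 0 := by
  have hHd : Differentiable ℝ H := hH.differentiable one_ne_zero
  have hICC : uIcc ta tb = Icc ta tb := uIcc_of_le htab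
  have hIOC : Set.uIoc ta tb = Ioc ta tb := uIoc_of_le htab
  have hqc : ContinuousOn q (Icc ta tb) := fun t ht => (hq t ht).continuousWithinAt
  have hpc : ContinuousOn p (Icc ta tb) := fun t ht => (hp t ht).continuousWithinAt
  have hδqc : ContinuousOn δq (Icc ta tb) := fun t ht => (hδq t ht).continuousWithinAt
  have hδpc : ContinuousOn δp (Icc ta tb) := fun t ht => (hδp t ht).continuousWithinAt
  set F : ℝ → ℝ → ℝ := fun ε t =>
    ⟪p t + ε • δp t, q' t + ε • δq' t⟫ - H (q t + ε • δq t, p t + ε • δp t) with hFdef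
  set G : ℝ → ℝ → ℝ := fun ε t =>
    (⟪p t + ε • δp t, δq' t⟫ + ⟪δp t, q' t + ε • δq' t⟫)
      - fderiv ℝ H (q t + ε • δq t, p t + ε • δp t) (δq t, δp t) with hGdef
  -- differentiability in ε
  have hdiff : ∀ (t ε : ℝ), HasDerivAt (fun ε => F ε t) (G ε t) ε := by
    intro t ε
    have h1 : HasDerivAt (fun ε : ℝ => p t + ε • δp t) (δp t) ε := by
      simpa using ((hasDerivAt_id ε).smul_const (δp t)).const_add (p t)
    have h2 : HasDerivAt (fun ε : ℝ => q' t + ε • δq' t) (δq' t) ε := by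
      simpa using ((hasDerivAt_id ε).smul_const (δq' t)).const_add (q' t)
    have h3 : HasDerivAt (fun ε : ℝ => q t + ε • δq t) (δq t) ε := by
      simpa using ((hasDerivAt_id ε).smul_const (δq t)).const_add (q t)
    have hHc : HasDerivAt (fun ε : ℝ => H (q t + ε • δq t, p t + ε • δp t))
        (fderiv ℝ H (q t + ε • δq t, p t + ε • δp t) (δq t, δp t)) ε :=
      (hHd _).hasFDerivAt.comp_hasDerivAt ε (h3.prodMk h1)
    exact (h1.inner ℝ h2).sub hHc
  -- continuity of F ε on [ta, tb]
  have hFc : ∀ ε : ℝ, ContinuousOn (F ε) (Icc ta tb) := fun ε =>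
    ((hpc.add (hδpc.const_smul ε)).inner (hq'.add (hδq'.const_smul ε))).sub
      (hH.continuous.comp_continuousOn
        ((hqc.add (hδqc.const_smul ε)).prodMk (hpc.add (hδpc.const_smul ε))))
  -- joint continuity of G on a compact box
  set K : Set (ℝ × ℝ) := Icc (-1 : ℝ) 1 ×ˢ Icc ta tb with hKdef
  have hsub : ∀ z : ℝ × ℝ, z ∈ K → z.2 ∈ Icc ta tb := fun z hz => hz.2
  have hGc : ContinuousOn (fun z : ℝ × ℝ => G z.1 z.2) K := by
    have c2 : ∀ {f : ℝ → EuclideanSpace ℝ (Fin d)}, ContinuousOn f (Icc ta tb) →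
        ContinuousOn (fun z : ℝ × ℝ => f z.2) K := fun hf =>
      hf.comp continuous_snd.continuousOn hsub
    have cfst : ContinuousOn (fun z : ℝ × ℝ => z.1) K := continuous_fst.continuousOn
    have cA : ContinuousOn
        (fun z : ℝ × ℝ => fderiv ℝ H (q z.2 + z.1 • δq z.2, p z.2 + z.1 • δp z.2)) K :=
      (hH.continuous_fderiv one_ne_zero).comp_continuousOn
        (((c2 hqc).add (cfst.smul (c2 hδqc))).prodMk ((c2 hpc).add (cfst.smul (c2 hδpc))))
    exact ((((c2 hpc).add (cfst.smul (c2 hδpc))).inner (c2 hδq')).add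
        ((c2 hδpc).inner ((c2 hq').add (cfst.smul (c2 hδq'))))).sub
      (cA.clm_apply ((c2 hδqc).prodMk (c2 hδpc)))
  obtain ⟨C, hC⟩ := (isCompact_Icc.prod isCompact_Icc).exists_bound_of_continuousOn hGc
  -- continuity of G 0 on [ta, tb]
  have hG0c : ContinuousOn (G 0) (Icc ta tb) := by
    have : ContinuousOn ((fun z : ℝ × ℝ => G z.1 z.2) ∘ fun t : ℝ => ((0 : ℝ), t))
        (Icc ta tb) :=
      hGc.comp (continuous_const.prodMk continuous_id).continuousOn
        (fun t ht => ⟨⟨by norm_num, by norm_num⟩, ht⟩)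
    exact this
  -- main parametric differentiation
  have hmeas : ∀ᶠ x in nhds (0 : ℝ),
      AEStronglyMeasurable (F x) (volume.restrict (Set.uIoc ta tb)) :=
    Filter.Eventually.of_forall fun x =>
      ((hFc x).mono (by rw [hIOC]; exact Ioc_subset_Icc_self)).aestronglyMeasurable
        measurableSet_uIoc
  have hint : IntervalIntegrable (F 0) volume ta tb :=
    ((hFc 0).mono hICC.subset).intervalIntegrable
  have hmeas' : AEStronglyMeasurable (G 0) (volume.restrict (Set.uIoc ta tb)) :=
    (hG0c.mono (by rw [hIOC]; exact Ioc_subset_Icc_self)).aestronglyMeasurable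
      measurableSet_uIoc
  have hbd : ∀ᵐ t ∂(volume : Measure ℝ), t ∈ Set.uIoc ta tb →
      ∀ x ∈ Metric.ball (0 : ℝ) 1, ‖G x t‖ ≤ C := by
    refine Filter.Eventually.of_forall fun t ht x hx => ?_
    have hx' : x ∈ Icc (-1 : ℝ) 1 := by
      rw [Metric.mem_ball, dist_zero_right, Real.norm_eq_abs] at hx
      exact ⟨by linarith [abs_lt.1 hx |>.1], le_of_lt (abs_lt.1 hx).2⟩
    exact hC (x, t) ⟨hx', Ioc_subset_Icc_self (hIOC ▸ ht)⟩
  have hbint : IntervalIntegrable (fun _ : ℝ => C) volume ta tb := intervalIntegrable_const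
  have hdif : ∀ᵐ t ∂(volume : Measure ℝ), t ∈ Set.uIoc ta tb →
      ∀ x ∈ Metric.ball (0 : ℝ) 1, HasDerivAt (fun x => F x t) (G x t) x :=
    Filter.Eventually.of_forall fun t _ x _ => hdiff t x
  have main := (intervalIntegral.hasDerivAt_integral_of_dominated_loc_of_deriv_le
    (Metric.ball_mem_nhds 0 one_pos) hmeas hint hmeas' hbd hbint hdif).2
  -- pointwise identities
  have hA := fun t => fderiv_pair_eq_grads d H hH (q t) (p t)
  have e1 : ∀ t : ℝ, ⟪δq t, -p' t - gradient (fun x => H (x, p t)) (q t)⟫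
      = -⟪δq t, p' t⟫ - fderiv ℝ H (q t, p t) (δq t, 0) := by
    intro t
    rw [hA t (δq t) 0]
    simp [inner_sub_right, inner_neg_right]
  have e2 : ∀ t : ℝ, ⟪δp t, q' t - gradient (fun y => H (q t, y)) (p t)⟫
      = ⟪δp t, q' t⟫ - fderiv ℝ H (q t, p t) (0, δp t) := by
    intro t
    rw [hA t 0 (δp t)]
    simp [inner_sub_right]
  have hG0 : ∀ t : ℝ, G 0 t
      = (-⟪δq t, p' t⟫ - fderiv ℝ H (q t, p t) (δq t, 0))
        + (⟪δp t, q' t⟫ - fderiv ℝ H (q t, p t) (0, δp t))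
        + (⟪p t, δq' t⟫ + ⟪p' t, δq t⟫) := by
    intro t
    show (⟪p t + (0:ℝ) • δp t, δq' t⟫ + ⟪δp t, q' t + (0:ℝ) • δq' t⟫)
        - fderiv ℝ H (q t + (0:ℝ) • δq t, p t + (0:ℝ) • δp t) (δq t, δp t) = _
    rw [zero_smul, zero_smul, zero_smul, add_zero, add_zero, add_zero]
    have hsplit : ((δq t, δp t) : EuclideanSpace ℝ (Fin d) × EuclideanSpace ℝ (Fin d))
        = (δq t, 0) + (0, δp t) := by simp
    rw [hsplit, map_add, real_inner_comm (δq t) (p' t)]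
    ring
  -- integrability of pieces
  have cA : ContinuousOn (fun t => fderiv ℝ H (q t, p t)) (Icc ta tb) :=
    (hH.continuous_fderiv one_ne_zero).comp_continuousOn (hqc.prodMk hpc)
  have hi1 : IntervalIntegrable
      (fun t => -⟪δq t, p' t⟫ - fderiv ℝ H (q t, p t) (δq t, 0)) volume ta tb :=
    (((hδqc.inner hp').neg.sub
      (cA.clm_apply (hδqc.prodMk continuousOn_const))).mono hICC.subset).intervalIntegrable
  have hi2 : IntervalIntegrable
      (fun t => ⟪δp t, q' t⟫ - fderiv ℝ H (q t, p t) (0, δp t)) volume ta tb :=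
    (((hδpc.inner hq').sub
      (cA.clm_apply (continuousOn_const.prodMk hδpc))).mono hICC.subset).intervalIntegrable
  have hi3 : IntervalIntegrable
      (fun t => ⟪p t, δq' t⟫ + ⟪p' t, δq t⟫) volume ta tb :=
    (((hpc.inner hδq').add (hp'.inner hδqc)).mono hICC.subset).intervalIntegrable
  -- FTC for the boundary term
  have hFTC : ∫ t in ta..tb, (⟪p t, δq' t⟫ + ⟪p' t, δq t⟫)
      = ⟪p tb, δq tb⟫ - ⟪p ta, δq ta⟫ := by
    refine integral_eq_sub_of_hasDeriv_right_of_le htab (hpc.inner hδqc) (fun t ht => ?_) hi3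
    have ht' : t ∈ Icc ta tb := Ioo_subset_Icc_self ht
    exact (((hp t ht').inner ℝ (hδq t ht')).hasDerivAt
      (Icc_mem_nhds ht.1 ht.2)).hasDerivWithinAt
  -- assemble
  have hSfun : S = fun x => ∫ t in ta..tb, F x t := funext hS
  rw [hSfun]
  refine main.congr_deriv ?_
  have hG0fun : (fun t => G 0 t)
      = fun t => (-⟪δq t, p' t⟫ - fderiv ℝ H (q t, p t) (δq t, 0))
        + (⟪δp t, q' t⟫ - fderiv ℝ H (q t, p t) (0, δp t))
        + (⟪p t, δq' t⟫ + ⟪p' t, δq t⟫) := funext hG0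
  rw [show (∫ t in ta..tb, G 0 t) = _ from congrArg (fun f => intervalIntegral f ta tb volume) hG0fun]
  simp only [intervalIntegral.integral_add (hi1.add hi2) hi3,
    intervalIntegral.integral_add hi1 hi2, hFTC]
  simp only [e1, e2]
  ring
end

section
/- Let d ≥ 1, let H : ℝ^d × ℝ^d → ℝ be continuously differentiable, and let q, p, δq, δp : [t_a, t_b] → ℝ^d be continuously differentiable curves such that (q, p) satisfies Hamilton's equations q̇(t) = ∇_p H(q(t), p(t)) and ṗ(t) = −∇_q H(q(t), p(t)) for all t ∈ [t_a, t_b]. Define S(ε) = ∫_{t_a}^{t_b} [(p(t) + ε δp(t))ᵀ (q̇(t) + ε δq̇(t)) − H(q(t) + ε δq(t), p(t) + ε δp(t))] dt. Then S'(0) = p(t_b)ᵀ δq(t_b) − p(t_a)ᵀ δq(t_a); in particular, if δq(t_a) = δq(t_b) = 0 then S'(0) = 0. -/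
open MeasureTheory intervalIntegral Set
open scoped RealInnerProductSpace

set_option maxHeartbeats 1000000

/-- If the C¹ pair `(q, p)` satisfies Hamilton's equations on
`[t_a, t_b]`, then the first variation of the action along C¹ variations
`(δq, δp)` equals `p(t_b)ᵀ δq(t_b) − p(t_a)ᵀ δq(t_a)`; in particular it vanishes
when `δq(t_a) = δq(t_b) = 0`. -/
theorem first_variation_along_hamiltonian_solution
    (d : ℕ) (hd : 1 ≤ d)
    (H : EuclideanSpace ℝ (Fin d) × EuclideanSpace ℝ (Fin d) → ℝ)
    (hH : ContDiff ℝ 1 H)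
    (ta tb : ℝ) (htab : ta ≤ tb)
    (q p δq δp q' p' δq' δp' : ℝ → EuclideanSpace ℝ (Fin d))
    (hq : ∀ t ∈ Icc ta tb, HasDerivWithinAt q (q' t) (Icc ta tb) t)
    (hp : ∀ t ∈ Icc ta tb, HasDerivWithinAt p (p' t) (Icc ta tb) t)
    (hδq : ∀ t ∈ Icc ta tb, HasDerivWithinAt δq (δq' t) (Icc ta tb) t)
    (hδp : ∀ t ∈ Icc ta tb, HasDerivWithinAt δp (δp' t) (Icc ta tb) t)
    (hq' : ContinuousOn q' (Icc ta tb))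
    (hp' : ContinuousOn p' (Icc ta tb))
    (hδq' : ContinuousOn δq' (Icc ta tb))
    (hδp' : ContinuousOn δp' (Icc ta tb))
    (hamq : ∀ t ∈ Icc ta tb, q' t = gradient (fun y => H (q t, y)) (p t))
    (hamp : ∀ t ∈ Icc ta tb, p' t = -gradient (fun x => H (x, p t)) (q t))
    (S : ℝ → ℝ)
    (hS : ∀ ε : ℝ, S ε = ∫ t in ta..tb,
      (⟪p t + ε • δp t, q' t + ε • δq' t⟫
        - H (q t + ε • δq t, p t + ε • δp t))) :
    HasDerivAt S (⟪p tb, δq tb⟫ - ⟪p ta, δq ta⟫) 0 ∧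
      (δq ta = 0 → δq tb = 0 → HasDerivAt S 0 0) := by
  classical
  have hqc : ContinuousOn q (Icc ta tb) := fun t ht => (hq t ht).continuousWithinAt
  have hpc : ContinuousOn p (Icc ta tb) := fun t ht => (hp t ht).continuousWithinAt
  have hδqc : ContinuousOn δq (Icc ta tb) := fun t ht => (hδq t ht).continuousWithinAt
  have hδpc : ContinuousOn δp (Icc ta tb) := fun t ht => (hδp t ht).continuousWithinAt
  have hHd : Differentiable ℝ H := hH.differentiable one_ne_zero
  set F : ℝ → ℝ → ℝ := fun ε t =>
    ⟪p t + ε • δp t, q' t + ε • δq' t⟫ - H (q t + ε • δq t, p t + ε • δp t) with hFdef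
  set F' : ℝ → ℝ → ℝ := fun ε t =>
    (⟪p t + ε • δp t, δq' t⟫ + ⟪δp t, q' t + ε • δq' t⟫)
      - fderiv ℝ H (q t + ε • δq t, p t + ε • δp t) (δq t, δp t) with hF'def
  -- pointwise derivative in ε
  have hderiv : ∀ t, ∀ ε : ℝ, HasDerivAt (fun ε => F ε t) (F' ε t) ε := by
    intro t ε
    have h1 : HasDerivAt (fun ε : ℝ => p t + ε • δp t) (δp t) ε := by
      simpa using ((hasDerivAt_id ε).smul_const (δp t)).const_add (p t)
    have h2 : HasDerivAt (fun ε : ℝ => q' t + ε • δq' t) (δq' t) ε := by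
      simpa using ((hasDerivAt_id ε).smul_const (δq' t)).const_add (q' t)
    have h3 : HasDerivAt (fun ε : ℝ => q t + ε • δq t) (δq t) ε := by
      simpa using ((hasDerivAt_id ε).smul_const (δq t)).const_add (q t)
    have hinner := h1.inner ℝ h2
    have hc : HasDerivAt (fun ε : ℝ => (q t + ε • δq t, p t + ε • δp t)) (δq t, δp t) ε :=
      h3.prodMk h1
    have hHder :=
      (hHd (q t + ε • δq t, p t + ε • δp t)).hasFDerivAt.comp_hasDerivAt ε hc
    exact hinner.sub hHder
  -- joint continuity of F'
  have hsnd : ∀ {g : ℝ → EuclideanSpace ℝ (Fin d)}, ContinuousOn g (Icc ta tb) →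
      ContinuousOn (fun z : ℝ × ℝ => g z.2) ((univ : Set ℝ) ×ˢ Icc ta tb) := by
    intro g hg
    exact hg.comp continuous_snd.continuousOn (fun z hz => hz.2)
  have hfst : ContinuousOn (fun z : ℝ × ℝ => z.1) ((univ : Set ℝ) ×ˢ Icc ta tb) :=
    continuous_fst.continuousOn
  have hA : ContinuousOn (fun z : ℝ × ℝ => p z.2 + z.1 • δp z.2)
      ((univ : Set ℝ) ×ˢ Icc ta tb) := (hsnd hpc).add (hfst.smul (hsnd hδpc))
  have hB : ContinuousOn (fun z : ℝ × ℝ => q' z.2 + z.1 • δq' z.2)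
      ((univ : Set ℝ) ×ˢ Icc ta tb) := (hsnd hq').add (hfst.smul (hsnd hδq'))
  have hQ : ContinuousOn (fun z : ℝ × ℝ => q z.2 + z.1 • δq z.2)
      ((univ : Set ℝ) ×ˢ Icc ta tb) := (hsnd hqc).add (hfst.smul (hsnd hδqc))
  have hLcont : ContinuousOn
      (fun z : ℝ × ℝ => fderiv ℝ H (q z.2 + z.1 • δq z.2, p z.2 + z.1 • δp z.2))
      ((univ : Set ℝ) ×ˢ Icc ta tb) :=
    (hH.continuous_fderiv one_ne_zero).comp_continuousOn (hQ.prodMk hA)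
  have hvcont : ContinuousOn (fun z : ℝ × ℝ => ((δq z.2, δp z.2) : EuclideanSpace ℝ (Fin d) × EuclideanSpace ℝ (Fin d)))
      ((univ : Set ℝ) ×ˢ Icc ta tb) := (hsnd hδqc).prodMk (hsnd hδpc)
  have hF'cont : ContinuousOn (fun z : ℝ × ℝ => F' z.1 z.2)
      ((univ : Set ℝ) ×ˢ Icc ta tb) := by
    refine ContinuousOn.sub ?_ ?_
    · exact (hA.inner (hsnd hδq')).add ((hsnd hδpc).inner hB)
    · exact isBoundedBilinearMap_apply.continuous.comp_continuousOn (hLcont.prodMk hvcont)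
  -- bound on compact set
  have hK : IsCompact ((Icc (-1 : ℝ) 1) ×ˢ Icc ta tb) := isCompact_Icc.prod isCompact_Icc
  obtain ⟨C, hC⟩ := hK.exists_bound_of_continuousOn
    (hF'cont.mono (fun z hz => ⟨mem_univ _, hz.2⟩))
  -- continuity of F ε and F' ε in t
  have hFcont : ∀ ε : ℝ, ContinuousOn (F ε) (Icc ta tb) := by
    intro ε
    refine ContinuousOn.sub ?_ ?_
    · exact (hpc.add ((continuousOn_const (c := ε)).smul hδpc)).inner
        (hq'.add ((continuousOn_const (c := ε)).smul hδq'))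
    · exact hH.continuous.comp_continuousOn
        ((hqc.add ((continuousOn_const (c := ε)).smul hδqc)).prodMk
          (hpc.add ((continuousOn_const (c := ε)).smul hδpc)))
  have hF'0cont : ContinuousOn (F' 0) (Icc ta tb) := by
    have hmap : ContinuousOn (fun t : ℝ => (((0:ℝ), t) : ℝ × ℝ)) (Icc ta tb) :=
      (continuous_const.prodMk continuous_id).continuousOn
    have := hF'cont.comp hmap (fun t ht => ⟨mem_univ _, ht⟩)
    exact this
  have hIsub : uIoc ta tb ⊆ Icc ta tb := by
    rw [uIoc_of_le htab]; exact Ioc_subset_Icc_self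
  -- differentiation under the integral
  have key := intervalIntegral.hasDerivAt_integral_of_dominated_loc_of_deriv_le
    (μ := volume) (F := F) (F' := F') (x₀ := (0 : ℝ)) (a := ta) (b := tb)
    (bound := fun _ => C) (s := Metric.ball (0 : ℝ) 1) (Metric.ball_mem_nhds _ one_pos)
    (Filter.Eventually.of_forall fun ε =>
      ((hFcont ε).mono hIsub).aestronglyMeasurable measurableSet_uIoc)
    (by
      apply ContinuousOn.intervalIntegrable
      rw [uIcc_of_le htab]
      exact hFcont 0)
    ((hF'0cont.mono hIsub).aestronglyMeasurable measurableSet_uIoc)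
    (Filter.Eventually.of_forall fun t ht ε hε => by
      have hε' : ε ∈ Icc (-1 : ℝ) 1 := by
        have := Metric.mem_ball.mp hε
        rw [Real.dist_eq, sub_zero] at this
        exact abs_le.mp this.le
      exact hC (ε, t) ⟨hε', hIsub ht⟩)
    intervalIntegrable_const
    (Filter.Eventually.of_forall fun t ht ε hε => hderiv t ε)
  obtain ⟨-, hSderiv⟩ := key
  -- identify the integrand at ε = 0 with the derivative of t ↦ ⟪p t, δq t⟫
  set φ : ℝ → ℝ := fun t => ⟪p t, δq t⟫ with hφdef
  set φ' : ℝ → ℝ := fun t => ⟪p t, δq' t⟫ + ⟪p' t, δq t⟫ with hφ'def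
  have hφderiv : ∀ t ∈ Icc ta tb, HasDerivWithinAt φ (φ' t) (Icc ta tb) t :=
    fun t ht => (hp t ht).inner ℝ (hδq t ht)
  have hgrad_inner : ∀ (g : EuclideanSpace ℝ (Fin d) → ℝ) (x v : EuclideanSpace ℝ (Fin d)), ⟪gradient g x, v⟫ = fderiv ℝ g x v := by
    intro g x v
    simp [gradient, InnerProductSpace.toDual_symm_apply]
  have hkey : ∀ t ∈ Icc ta tb, F' 0 t = φ' t := by
    intro t ht
    set L := fderiv ℝ H (q t, p t) with hLdef
    have hL : HasFDerivAt H L (q t, p t) := (hHd _).hasFDerivAt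
    have h1 : fderiv ℝ (fun x => H (x, p t)) (q t)
        = L.comp (ContinuousLinearMap.inl ℝ (EuclideanSpace ℝ (Fin d)) (EuclideanSpace ℝ (Fin d))) :=
      (hL.comp (q t) (hasFDerivAt_prodMk_left (q t) (p t))).fderiv
    have h2 : fderiv ℝ (fun y => H (q t, y)) (p t)
        = L.comp (ContinuousLinearMap.inr ℝ (EuclideanSpace ℝ (Fin d)) (EuclideanSpace ℝ (Fin d))) :=
      (hL.comp (p t) (hasFDerivAt_prodMk_right (q t) (p t))).fderiv
    have e1 : ⟪p' t, δq t⟫ = -(L (δq t, 0)) := by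
      rw [hamp t ht, inner_neg_left, hgrad_inner, h1]
      simp
    have e2 : ⟪q' t, δp t⟫ = L (0, δp t) := by
      rw [hamq t ht, hgrad_inner, h2]
      simp
    have esplit : L (δq t, δp t) = L (δq t, 0) + L (0, δp t) := by
      rw [← map_add]
      simp [Prod.ext_iff]
    have hcomm : ⟪δp t, q' t⟫ = ⟪q' t, δp t⟫ := real_inner_comm _ _
    simp only [hF'def, hφ'def, zero_smul, add_zero]
    rw [esplit, ← e2, hcomm]
    have : L (δq t, 0) = -⟪p' t, δq t⟫ := by rw [e1]; ring
    rw [this]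
    ring
  -- fundamental theorem of calculus
  have hφcont : ContinuousOn φ (Icc ta tb) :=
    fun t ht => (hφderiv t ht).continuousWithinAt
  have hφ'cont : ContinuousOn φ' (Icc ta tb) :=
    (hpc.inner hδq').add (hp'.inner hδqc)
  have hFTC : ∫ t in ta..tb, φ' t = φ tb - φ ta := by
    apply intervalIntegral.integral_eq_sub_of_hasDeriv_right_of_le htab hφcont
    · intro x hx
      exact ((hφderiv x (Ioo_subset_Icc_self hx)).hasDerivAt
        (Icc_mem_nhds hx.1 hx.2)).hasDerivWithinAt
    · apply ContinuousOn.intervalIntegrable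
      rwa [uIcc_of_le htab]
  have hIeq : ∫ t in ta..tb, F' 0 t = ⟪p tb, δq tb⟫ - ⟪p ta, δq ta⟫ := by
    rw [intervalIntegral.integral_congr (g := φ') (fun t ht => hkey t (by rwa [uIcc_of_le htab] at ht))]
    exact hFTC
  have hSfun : S = fun ε => ∫ t in ta..tb, F ε t := funext hS
  rw [hIeq] at hSderiv
  rw [hSfun]
  refine ⟨hSderiv, fun h0 h1 => ?_⟩
  have : ⟪p tb, δq tb⟫ - ⟪p ta, δq ta⟫ = 0 := by
    rw [h0, h1]; simp
  rwa [this] at hSderiv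
end

section
/- Let d ≥ 1, let H : ℝ^d × ℝ^d → ℝ be continuously differentiable, and let (q(t, α), p(t, α)) : [t_a, t_b] × ℝ → ℝ^d × ℝ^d be a family of curves that is continuously differentiable jointly in (t, α), has a continuous mixed partial derivative ∂²q/∂α∂t, and is such that for every α the curve t ↦ (q(t, α), p(t, α)) satisfies Hamilton's equations for H. Define S(α) = ∫_{t_a}^{t_b} [p(t, α)ᵀ ∂_t q(t, α) − H(q(t, α), p(t, α))] dt. Then S is differentiable and S'(α) = p(t_b, α)ᵀ ∂_α q(t_b, α) − p(t_a, α)ᵀ ∂_α q(t_a, α) for every α; that is, the action of a field of Hamiltonian solutions depends on the family only through the endpoint positions, with derivative given by the endpoint momenta. -/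
open MeasureTheory intervalIntegral Set
open scoped RealInnerProductSpace

section aux
variable {E : Type*} [NormedAddCommGroup E] [NormedSpace ℝ E]

lemma aux_pd1 {f : ℝ × ℝ → E} (hf : ContDiff ℝ 1 f) (t α : ℝ) :
    HasDerivAt (fun s => f (s, α)) (fderiv ℝ f (t, α) (1, 0)) t :=
  (hf.differentiable one_ne_zero (t, α)).hasFDerivAt.comp_hasDerivAt t
    ((hasDerivAt_id t).prodMk (hasDerivAt_const t α))

lemma aux_pd2 {f : ℝ × ℝ → E} (hf : ContDiff ℝ 1 f) (t α : ℝ) :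
    HasDerivAt (fun b => f (t, b)) (fderiv ℝ f (t, α) (0, 1)) α :=
  (hf.differentiable one_ne_zero (t, α)).hasFDerivAt.comp_hasDerivAt α
    ((hasDerivAt_const α t).prodMk (hasDerivAt_id α))

lemma aux_cont {f : ℝ × ℝ → E} (hf : ContDiff ℝ 1 f) (v : ℝ × ℝ) :
    Continuous fun x => fderiv ℝ f x v :=
  (hf.continuous_fderiv one_ne_zero).clm_apply continuous_const

lemma aux_inner_gradient {F : Type*} [NormedAddCommGroup F] [InnerProductSpace ℝ F]
    [CompleteSpace F] (g : F → ℝ) (x v : F) : ⟪gradient g x, v⟫ = fderiv ℝ g x v := by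
  rw [gradient]; exact InnerProductSpace.toDual_symm_apply
end aux

/-- For a jointly C¹ family `(q(t,α), p(t,α))` of solutions of
Hamilton's equations for a C¹ Hamiltonian `H`, with existing and continuous mixed
partial `∂²q/∂α∂t`, the action `S(α)` is differentiable with
`S'(α) = p(t_b,α)ᵀ ∂_α q(t_b,α) − p(t_a,α)ᵀ ∂_α q(t_a,α)`. -/
theorem action_of_field_of_solutions_depends_on_endpoints
    (d : ℕ) (hd : 1 ≤ d)
    (H : EuclideanSpace ℝ (Fin d) × EuclideanSpace ℝ (Fin d) → ℝ)
    (hH : ContDiff ℝ 1 H)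
    (ta tb : ℝ) (htab : ta ≤ tb)
    (q p : ℝ → ℝ → EuclideanSpace ℝ (Fin d))
    (hq : ContDiff ℝ 1 (fun x : ℝ × ℝ => q x.1 x.2))
    (hp : ContDiff ℝ 1 (fun x : ℝ × ℝ => p x.1 x.2))
    (hmix_exists : ∀ (t α : ℝ),
      DifferentiableAt ℝ (fun b => deriv (fun s => q s b) t) α)
    (hmix_cont : Continuous (fun x : ℝ × ℝ =>
      deriv (fun b => deriv (fun s => q s b) x.1) x.2))
    (hamq : ∀ (α t : ℝ), HasDerivAt (fun s => q s α)
      (gradient (fun y => H (q t α, y)) (p t α)) t)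
    (hamp : ∀ (α t : ℝ), HasDerivAt (fun s => p s α)
      (-gradient (fun x => H (x, p t α)) (q t α)) t)
    (S : ℝ → ℝ)
    (hS : ∀ α : ℝ, S α = ∫ t in ta..tb,
      (⟪p t α, deriv (fun s => q s α) t⟫ - H (q t α, p t α))) :
    ∀ α : ℝ, HasDerivAt S
      (⟪p tb α, deriv (fun b => q tb b) α⟫
        - ⟪p ta α, deriv (fun b => q ta b) α⟫) α := by
  have _hd := hd
  set Q : ℝ × ℝ → EuclideanSpace ℝ (Fin d) := fun x => q x.1 x.2 with hQ
  set P : ℝ × ℝ → EuclideanSpace ℝ (Fin d) := fun x => p x.1 x.2 with hP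
  set qt : ℝ → ℝ → EuclideanSpace ℝ (Fin d) := fun t α => fderiv ℝ Q (t, α) (1, 0) with hqt_def
  set qa : ℝ → ℝ → EuclideanSpace ℝ (Fin d) := fun t α => fderiv ℝ Q (t, α) (0, 1) with hqa_def
  set pt : ℝ → ℝ → EuclideanSpace ℝ (Fin d) := fun t α => fderiv ℝ P (t, α) (1, 0) with hpt_def
  set pa : ℝ → ℝ → EuclideanSpace ℝ (Fin d) := fun t α => fderiv ℝ P (t, α) (0, 1) with hpa_def
  have hqt : ∀ t α, HasDerivAt (fun s => q s α) (qt t α) t := fun t α => aux_pd1 hq t α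
  have hqa : ∀ t α, HasDerivAt (fun b => q t b) (qa t α) α := fun t α => aux_pd2 hq t α
  have hpt : ∀ t α, HasDerivAt (fun s => p s α) (pt t α) t := fun t α => aux_pd1 hp t α
  have hpa : ∀ t α, HasDerivAt (fun b => p t b) (pa t α) α := fun t α => aux_pd2 hp t α
  have deriv_q : ∀ t α, deriv (fun s => q s α) t = qt t α := fun t α => (hqt t α).deriv
  have deriv_qa : ∀ t α, deriv (fun b => q t b) α = qa t α := fun t α => (hqa t α).deriv
  -- continuity of the partial derivatives
  have cqt : Continuous fun x : ℝ × ℝ => qt x.1 x.2 := aux_cont hq (1, 0)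
  have cqa : Continuous fun x : ℝ × ℝ => qa x.1 x.2 := aux_cont hq (0, 1)
  have cpt : Continuous fun x : ℝ × ℝ => pt x.1 x.2 := aux_cont hp (1, 0)
  have cpa : Continuous fun x : ℝ × ℝ => pa x.1 x.2 := aux_cont hp (0, 1)
  have cq : Continuous fun x : ℝ × ℝ => q x.1 x.2 := hq.continuous
  have cp : Continuous fun x : ℝ × ℝ => p x.1 x.2 := hp.continuous
  -- the mixed partial
  set m : ℝ → ℝ → EuclideanSpace ℝ (Fin d) := fun t α => deriv (fun b => qt t b) α with hm_def
  have hfunm : ∀ t, (fun b => deriv (fun s => q s b) t) = fun b => qt t b := fun t =>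
    funext fun b => deriv_q t b
  have hm : ∀ t α, HasDerivAt (fun b => qt t b) (m t α) α := by
    intro t α
    have h := hmix_exists t α
    rw [hfunm t] at h
    exact h.hasDerivAt
  have cm : Continuous fun x : ℝ × ℝ => m x.1 x.2 := by
    have : (fun x : ℝ × ℝ => deriv (fun b => deriv (fun s => q s b) x.1) x.2)
        = fun x : ℝ × ℝ => m x.1 x.2 := by
      funext x; rw [hfunm x.1]
    rw [← this]; exact hmix_cont
  -- Hamilton's equations rewritten
  have hamq' : ∀ t α, gradient (fun y => H (q t α, y)) (p t α) = qt t α := fun t α =>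
    (hamq α t).unique (hqt t α)
  have hamp' : ∀ t α, gradient (fun x => H (x, p t α)) (q t α) = -pt t α := by
    intro t α
    have := (hamp α t).unique (hpt t α)
    rw [← this, neg_neg]
  -- Step B1: integral representation of `qa`
  have key : ∀ (t α₀ : ℝ), qa t α₀ - qa 0 α₀ = ∫ s in (0:ℝ)..t, m s α₀ := by
    intro t α₀
    obtain ⟨C, hC⟩ := ((isCompact_uIcc (a := (0:ℝ)) (b := t)).prod
      (isCompact_closedBall α₀ 1)).exists_bound_of_continuousOn cm.continuousOn
    have cqt_x : ∀ x : ℝ, Continuous fun s => qt s x := fun x =>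
      cqt.comp (continuous_id.prodMk continuous_const)
    have cm_x : Continuous fun s => m s α₀ := cm.comp (continuous_id.prodMk continuous_const)
    have hder := (intervalIntegral.hasDerivAt_integral_of_dominated_loc_of_deriv_le
      (F := fun x s => qt s x) (F' := fun x s => m s x) (x₀ := α₀) (a := (0:ℝ)) (b := t)
      (bound := fun _ => C) (Metric.ball_mem_nhds α₀ one_pos)
      (Filter.Eventually.of_forall fun x => (cqt_x x).aestronglyMeasurable)
      ((cqt_x α₀).intervalIntegrable 0 t)
      cm_x.aestronglyMeasurable
      (ae_of_all _ fun s hs x hx => hC (s, x)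
        ⟨uIoc_subset_uIcc hs, Metric.ball_subset_closedBall hx⟩)
      (intervalIntegrable_const : IntervalIntegrable (fun _ => C) volume 0 t)
      (ae_of_all _ fun s _ x _ => hm s x)).2
    have hint : (fun x : ℝ => ∫ s in (0:ℝ)..t, qt s x) = fun x => q t x - q 0 x :=
      funext fun x => intervalIntegral.integral_eq_sub_of_hasDerivAt (fun s _ => hqt s x)
        ((cqt_x x).intervalIntegrable 0 t)
    rw [hint] at hder
    exact ((hqa t α₀).sub (hqa 0 α₀)).unique hder
  -- Step B2: `t ↦ qa t α` is differentiable with derivative `m`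
  have hqa_t : ∀ (α t₀ : ℝ), HasDerivAt (fun s => qa s α) (m t₀ α) t₀ := by
    intro α t₀
    have cm_x : Continuous fun s => m s α := cm.comp (continuous_id.prodMk continuous_const)
    have h1 : HasDerivAt (fun t => ∫ s in (0:ℝ)..t, m s α) (m t₀ α) t₀ :=
      intervalIntegral.integral_hasDerivAt_right (cm_x.intervalIntegrable 0 t₀)
        (cm_x.stronglyMeasurableAtFilter _ _) cm_x.continuousAt
    have h2 : (fun s => qa s α) = fun t => qa 0 α + ∫ s in (0:ℝ)..t, m s α :=
      funext fun t => by rw [← key t α]; abel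
    rw [h2]
    exact h1.const_add (qa 0 α)
  -- Step D: derivative in `t` of the boundary quantity
  have hGt : ∀ (α t : ℝ), HasDerivAt (fun s => ⟪p s α, qa s α⟫)
      (⟪p t α, m t α⟫ + ⟪pt t α, qa t α⟫) t :=
    fun α t => (hpt t α).inner ℝ (hqa_t α t)
  -- Step C: derivative in `α` of the integrand
  set F : ℝ → ℝ → ℝ := fun x t => ⟪p t x, qt t x⟫ - H (q t x, p t x) with hF_def
  set F' : ℝ → ℝ → ℝ := fun x t => ⟪p t x, m t x⟫ + ⟪pt t x, qa t x⟫ with hF'_def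
  have hF : ∀ (t x : ℝ), HasDerivAt (fun b => F b t) (F' x t) x := by
    intro t x
    have h1 : HasDerivAt (fun b => ⟪p t b, qt t b⟫) (⟪p t x, m t x⟫ + ⟪pa t x, qt t x⟫) x :=
      (hpa t x).inner ℝ (hm t x)
    have hz := (hH.differentiable one_ne_zero (q t x, p t x)).hasFDerivAt
    have h2 : HasDerivAt (fun b => H (q t b, p t b))
        (fderiv ℝ H (q t x, p t x) (qa t x, pa t x)) x :=
      hz.comp_hasDerivAt x ((hqa t x).prodMk (hpa t x))
    have hsplit : ∀ u v : EuclideanSpace ℝ (Fin d),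
        fderiv ℝ H (q t x, p t x) (u, v)
          = ⟪gradient (fun z => H (z, p t x)) (q t x), u⟫
            + ⟪gradient (fun y => H (q t x, y)) (p t x), v⟫ := by
      intro u v
      have hd1 : HasFDerivAt (fun z => H (z, p t x))
          ((fderiv ℝ H (q t x, p t x)).comp
            ((ContinuousLinearMap.id ℝ _).prod 0)) (q t x) :=
        hz.comp (q t x) ((hasFDerivAt_id (q t x)).prodMk (hasFDerivAt_const (p t x) (q t x)))
      have hd2 : HasFDerivAt (fun y => H (q t x, y))
          ((fderiv ℝ H (q t x, p t x)).comp
            ((0 : _ →L[ℝ] _).prod (ContinuousLinearMap.id ℝ _))) (p t x) :=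
        hz.comp (p t x) ((hasFDerivAt_const (q t x) (p t x)).prodMk (hasFDerivAt_id (p t x)))
      rw [aux_inner_gradient, aux_inner_gradient, hd1.fderiv, hd2.fderiv]
      simp only [ContinuousLinearMap.coe_comp', Function.comp_apply,
        ContinuousLinearMap.prod_apply, ContinuousLinearMap.coe_id', id_eq,
        ContinuousLinearMap.zero_apply]
      rw [← map_add]
      congr 1
      simp [Prod.mk_add_mk]
    have htot := h1.sub h2
    refine htot.congr_deriv ?_
    rw [hsplit, hamq', hamp', inner_neg_left, real_inner_comm (pa t x) (qt t x)]
    ring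
  -- joint continuity of `F`, `F'`
  have cswap : Continuous fun z : ℝ × ℝ => (z.2, z.1) := continuous_snd.prodMk continuous_fst
  have cF' : Continuous fun z : ℝ × ℝ => F' z.1 z.2 := by
    exact ((cp.comp cswap).inner (cm.comp cswap)).add ((cpt.comp cswap).inner (cqa.comp cswap))
  have cFx : ∀ x : ℝ, Continuous fun t => F x t := by
    intro x
    have ι : Continuous fun t : ℝ => (t, x) := continuous_id.prodMk continuous_const
    exact ((cp.comp ι).inner (cqt.comp ι)).sub
      (hH.continuous.comp ((cq.comp ι).prodMk (cp.comp ι)))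
  intro α₀
  -- Step E: differentiate under the integral sign
  obtain ⟨C, hC⟩ := ((isCompact_uIcc (a := ta) (b := tb)).prod
    (isCompact_closedBall α₀ 1)).exists_bound_of_continuousOn
    ((cF'.comp cswap).continuousOn)
  have hder := (intervalIntegral.hasDerivAt_integral_of_dominated_loc_of_deriv_le
    (F := F) (F' := F') (x₀ := α₀) (a := ta) (b := tb) (bound := fun _ => C) (Metric.ball_mem_nhds α₀ one_pos)
    (Filter.Eventually.of_forall fun x => (cFx x).aestronglyMeasurable)
    ((cFx α₀).intervalIntegrable ta tb)
    ((cF'.comp (continuous_const.prodMk continuous_id)).aestronglyMeasurable)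
    (ae_of_all _ fun s hs x hx => hC (s, x)
      ⟨uIoc_subset_uIcc hs, Metric.ball_subset_closedBall hx⟩)
    (intervalIntegrable_const : IntervalIntegrable (fun _ => C) volume ta tb)
    (ae_of_all _ fun s _ x _ => hF s x)).2
  -- Step F: fundamental theorem of calculus for the boundary quantity
  have hFTC : (∫ t in ta..tb, F' α₀ t) = ⟪p tb α₀, qa tb α₀⟫ - ⟪p ta α₀, qa ta α₀⟫ :=
    intervalIntegral.integral_eq_sub_of_hasDerivAt (fun t _ => hGt α₀ t)
      ((cF'.comp (continuous_const.prodMk continuous_id)).intervalIntegrable ta tb)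
  rw [hFTC] at hder
  -- final assembly
  have hSfun : S = fun x => ∫ t in ta..tb, F x t := by
    funext x
    rw [hS x]
    refine intervalIntegral.integral_congr fun t _ => ?_
    rw [hF_def]
    simp only
    rw [deriv_q]
  rw [hSfun, deriv_qa, deriv_qa]
  exact hder
end

section
/- Let d ≥ 1, let S : ℝ^d × ℝ^d → ℝ be twice continuously differentiable, let U ⊆ ℝ^d × ℝ^d be open, and let Q, P : U → ℝ^d be differentiable maps such that for every (q₀, p₀) ∈ U one has p₀ = −∇₁S(q₀, Q(q₀, p₀)) and P(q₀, p₀) = ∇₂S(q₀, Q(q₀, p₀)), where ∇₁S and ∇₂S denote the gradients of S in its first and second ℝ^d arguments. Then the map φ = (Q, P) : U → ℝ^d × ℝ^d is symplectic: at every point x ∈ U its total derivative Dφ(x), viewed as a (2d) × (2d) real matrix, satisfies Dφ(x)ᵀ J Dφ(x) = J, where J is the canonical symplectic matrix J = [[0, I_d], [−I_d, 0]]. -/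
open Matrix
open scoped RealInnerProductSpace

/-- Analytic core: the derivative of a map with a first-kind generating function
satisfies the symplectic bilinear identity. -/
lemma generating_function_symplectic_form_aux
    {E : Type*} [NormedAddCommGroup E] [InnerProductSpace ℝ E] [CompleteSpace E]
    (S : E × E → ℝ) (hS : ContDiff ℝ 2 S)
    (U : Set (E × E)) (hU : IsOpen U)
    (Q P : E × E → E)
    (hQ : DifferentiableOn ℝ Q U) (hP : DifferentiableOn ℝ P U)
    (hgen : ∀ x ∈ U,
      x.2 = -gradient (fun a => S (a, Q x)) x.1 ∧
      P x = gradient (fun b => S (x.1, b)) (Q x))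
    (x : E × E) (hx : x ∈ U) :
    ∀ w w' : E × E,
      ⟪fderiv ℝ Q x w, fderiv ℝ P x w'⟫ - ⟪fderiv ℝ P x w, fderiv ℝ Q x w'⟫
        = ⟪w.1, w'.2⟫ - ⟪w.2, w'.1⟫ := by
  have hUx : U ∈ nhds x := hU.mem_nhds hx
  have hQx : DifferentiableAt ℝ Q x := hQ.differentiableAt hUx
  have hPx : DifferentiableAt ℝ P x := hP.differentiableAt hUx
  set A := fderiv ℝ Q x with hA
  set B := fderiv ℝ P x with hB
  have hSd : Differentiable ℝ S := hS.differentiable (by norm_num)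
  set f' := fderiv ℝ S with hf'
  set z : E × E := (x.1, Q x) with hz
  set H := fderiv ℝ f' z with hH
  have hsymm : ∀ a b : E × E, H a b = H b a := fun a b =>
    (hS.contDiffAt.isSymmSndFDerivAt (by norm_num)) a b
  -- partial derivatives of S
  have hfst : ∀ (q b : E), fderiv ℝ (fun a => S (a, b)) q
      = (f' (q, b)).comp (ContinuousLinearMap.inl ℝ E E) := by
    intro q b
    exact ((hSd (q, b)).hasFDerivAt.comp q (hasFDerivAt_prodMk_left q b)).fderiv
  have hsnd : ∀ (a b : E), fderiv ℝ (fun b' => S (a, b')) b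
      = (f' (a, b)).comp (ContinuousLinearMap.inr ℝ E E) := by
    intro a b
    exact ((hSd (a, b)).hasFDerivAt.comp b (hasFDerivAt_prodMk_right a b)).fderiv
  have hgrad : ∀ (g : E → ℝ) (q v : E), ⟪gradient g q, v⟫ = fderiv ℝ g q v := by
    intro g q v
    exact InnerProductSpace.toDual_symm_apply
  -- the generating relations as scalar identities on U
  have hI1 : ∀ y ∈ U, ∀ v : E, ⟪v, y.2⟫ = -(f' (y.1, Q y) (v, 0)) := by
    intro y hy v
    rw [real_inner_comm, (hgen y hy).1, inner_neg_left, hgrad, hfst]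
    simp
  have hI2 : ∀ y ∈ U, ∀ v : E, ⟪v, P y⟫ = f' (y.1, Q y) (0, v) := by
    intro y hy v
    rw [real_inner_comm, (hgen y hy).2, hgrad, hsnd]
    simp
  -- derivative of y ↦ f' (y.1, Q y)
  set ψ' : (E × E) →L[ℝ] E × E := (ContinuousLinearMap.fst ℝ E E).prod A with hψ'
  have hψ : HasFDerivAt (fun y : E × E => (y.1, Q y)) ψ' x :=
    (hasFDerivAt_fst).prodMk hQx.hasFDerivAt
  have hf'd : DifferentiableAt ℝ f' z :=
    ((hS.fderiv_right (m := 1) (by norm_num)).differentiable (by norm_num)) z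
  have hΦ : HasFDerivAt (fun y : E × E => f' (y.1, Q y)) (H.comp ψ') x :=
    hf'd.hasFDerivAt.comp (G := E × E →L[ℝ] ℝ) x hψ
  have heval : ∀ c : E × E, HasFDerivAt (fun y : E × E => f' (y.1, Q y) c)
      ((ContinuousLinearMap.apply ℝ ℝ c).comp (H.comp ψ')) x :=
    fun c => (ContinuousLinearMap.apply ℝ ℝ c).hasFDerivAt.comp x hΦ
  -- differentiated identities
  have hE1 : ∀ (v : E) (w : E × E), ⟪v, w.2⟫ = -(H (w.1, A w) (v, 0)) := by
    intro v w
    have ha : HasFDerivAt (fun y : E × E => ⟪v, y.2⟫)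
        ((innerSL ℝ v).comp (ContinuousLinearMap.snd ℝ E E)) x :=
      ((innerSL ℝ v).comp (ContinuousLinearMap.snd ℝ E E)).hasFDerivAt
    have h1 : HasFDerivAt (fun y : E × E => ⟪v, y.2⟫ + f' (y.1, Q y) (v, 0))
        (((innerSL ℝ v).comp (ContinuousLinearMap.snd ℝ E E))
          + (ContinuousLinearMap.apply ℝ ℝ ((v, (0 : E)))).comp (H.comp ψ')) x :=
      ha.add (heval (v, 0))
    have h0 : HasFDerivAt (fun y : E × E => ⟪v, y.2⟫ + f' (y.1, Q y) (v, 0))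
        (0 : (E × E) →L[ℝ] ℝ) x := by
      apply (hasFDerivAt_const (0 : ℝ) x).congr_of_eventuallyEq
      filter_upwards [hUx] with y hy
      rw [hI1 y hy v]; ring
    have h2 := congrArg (fun L : (E × E) →L[ℝ] ℝ => L w) (h1.unique h0)
    simp only [ContinuousLinearMap.add_apply, ContinuousLinearMap.comp_apply,
      ContinuousLinearMap.coe_snd', ContinuousLinearMap.apply_apply,
      ContinuousLinearMap.prod_apply, ContinuousLinearMap.coe_fst',
      ContinuousLinearMap.zero_apply, innerSL_apply_apply, hψ'] at h2
    linarith [h2]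
  have hE2 : ∀ (v : E) (w : E × E), ⟪v, B w⟫ = H (w.1, A w) (0, v) := by
    intro v w
    have ha : HasFDerivAt (fun y : E × E => ⟪v, P y⟫) ((innerSL ℝ v).comp B) x :=
      (innerSL ℝ v).hasFDerivAt.comp x hPx.hasFDerivAt
    have h1 : HasFDerivAt (fun y : E × E => ⟪v, P y⟫ - f' (y.1, Q y) (0, v))
        (((innerSL ℝ v).comp B)
          - (ContinuousLinearMap.apply ℝ ℝ (((0 : E), v))).comp (H.comp ψ')) x :=
      ha.sub (heval (0, v))
    have h0 : HasFDerivAt (fun y : E × E => ⟪v, P y⟫ - f' (y.1, Q y) (0, v))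
        (0 : (E × E) →L[ℝ] ℝ) x := by
      apply (hasFDerivAt_const (0 : ℝ) x).congr_of_eventuallyEq
      filter_upwards [hUx] with y hy
      rw [hI2 y hy v]; ring
    have h2 := congrArg (fun L : (E × E) →L[ℝ] ℝ => L w) (h1.unique h0)
    simp only [ContinuousLinearMap.sub_apply, ContinuousLinearMap.comp_apply,
      ContinuousLinearMap.apply_apply, ContinuousLinearMap.prod_apply,
      ContinuousLinearMap.coe_fst', ContinuousLinearMap.zero_apply,
      innerSL_apply_apply, hψ'] at h2
    linarith [h2]
  -- the key symplectic identity
  have hadd : ∀ (c : E × E) (a b : E), H c ((a, b) : E × E) = H c (a, 0) + H c (0, b) := by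
    intro c a b
    have h : ((a, b) : E × E) = (a, 0) + (0, b) := by simp [Prod.ext_iff]
    rw [h, map_add]
  intro w w'
  have h1 : ⟪A w, B w'⟫ = H (w'.1, A w') (0, A w) := hE2 (A w) w'
  have h2 : ⟪B w, A w'⟫ = H (w.1, A w) (0, A w') := by
    rw [real_inner_comm]; exact hE2 (A w') w
  have h3 : ⟪w.1, w'.2⟫ = -(H (w'.1, A w') (w.1, 0)) := hE1 w.1 w'
  have h4 : ⟪w.2, w'.1⟫ = -(H (w.1, A w) (w'.1, 0)) := by
    rw [real_inner_comm]; exact hE1 w'.1 w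
  have hs : H (w'.1, A w') (w.1, 0) + H (w'.1, A w') (0, A w)
      = H (w.1, A w) (w'.1, 0) + H (w.1, A w) (0, A w') := by
    rw [← hadd, ← hadd]; exact hsymm _ _
  rw [h1, h2, h3, h4]
  linarith

/-- If `S(q_a, q_b)` is a C² generating function of the first
kind for the map `φ = (Q, P)` on an open set `U` (i.e. `p₀ = −∇₁S(q₀, Q(q₀,p₀))`
and `P(q₀,p₀) = ∇₂S(q₀, Q(q₀,p₀))`), then `φ` is symplectic: at every `x ∈ U`
the total derivative `Dφ(x)`, viewed as a `(2d) × (2d)` real matrix `D`, satisfies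
`Dᵀ J D = J` with `J = [[0, I],[−I, 0]]` the canonical symplectic matrix. -/
theorem generating_function_map_is_symplectic
    (d : ℕ) (hd : 1 ≤ d)
    (S : EuclideanSpace ℝ (Fin d) × EuclideanSpace ℝ (Fin d) → ℝ)
    (hS : ContDiff ℝ 2 S)
    (U : Set (EuclideanSpace ℝ (Fin d) × EuclideanSpace ℝ (Fin d)))
    (hU : IsOpen U)
    (Q P : EuclideanSpace ℝ (Fin d) × EuclideanSpace ℝ (Fin d) →
      EuclideanSpace ℝ (Fin d))
    (hQ : DifferentiableOn ℝ Q U) (hP : DifferentiableOn ℝ P U)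
    (hgen : ∀ x ∈ U,
      x.2 = -gradient (fun a => S (a, Q x)) x.1 ∧
      P x = gradient (fun b => S (x.1, b)) (Q x)) :
    ∀ x ∈ U, ∀ D : Matrix (Fin d ⊕ Fin d) (Fin d ⊕ Fin d) ℝ,
      (∀ i j : Fin d ⊕ Fin d,
        D i j =
          Sum.elim
            (fun k => (fderiv ℝ (fun y => (Q y, P y)) x
              (Sum.elim
                (fun l => ((EuclideanSpace.single l 1 : EuclideanSpace ℝ (Fin d)),
                  (0 : EuclideanSpace ℝ (Fin d))))
                (fun l => ((0 : EuclideanSpace ℝ (Fin d)),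
                  (EuclideanSpace.single l 1 : EuclideanSpace ℝ (Fin d)))) j)).1 k)
            (fun k => (fderiv ℝ (fun y => (Q y, P y)) x
              (Sum.elim
                (fun l => ((EuclideanSpace.single l 1 : EuclideanSpace ℝ (Fin d)),
                  (0 : EuclideanSpace ℝ (Fin d))))
                (fun l => ((0 : EuclideanSpace ℝ (Fin d)),
                  (EuclideanSpace.single l 1 : EuclideanSpace ℝ (Fin d)))) j)).2 k) i) →
      Dᵀ * Matrix.fromBlocks (0 : Matrix (Fin d) (Fin d) ℝ) 1 (-1) 0 * D =
        Matrix.fromBlocks (0 : Matrix (Fin d) (Fin d) ℝ) 1 (-1) 0 := by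
  intro x hx D hD
  have key := generating_function_symplectic_form_aux S hS U hU Q P hQ hP hgen x hx
  have hUx : U ∈ nhds x := hU.mem_nhds hx
  have hQx : DifferentiableAt ℝ Q x := hQ.differentiableAt hUx
  have hPx : DifferentiableAt ℝ P x := hP.differentiableAt hUx
  set A := fderiv ℝ Q x with hA
  set B := fderiv ℝ P x with hB
  set e : Fin d ⊕ Fin d → EuclideanSpace ℝ (Fin d) × EuclideanSpace ℝ (Fin d) :=
    Sum.elim
      (fun l => ((EuclideanSpace.single l 1 : EuclideanSpace ℝ (Fin d)),
        (0 : EuclideanSpace ℝ (Fin d))))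
      (fun l => ((0 : EuclideanSpace ℝ (Fin d)),
        (EuclideanSpace.single l 1 : EuclideanSpace ℝ (Fin d)))) with he
  have hDfp : fderiv ℝ (fun y => (Q y, P y)) x = A.prod B := hQx.fderiv_prodMk hPx
  have hDval : ∀ i j, D i j = Sum.elim (fun k => A (e j) k) (fun k => B (e j) k) i := by
    intro i j
    rw [hD i j, hDfp]
    rfl
  ext i j
  have h1 : ∀ a, ((Matrix.fromBlocks (0 : Matrix (Fin d) (Fin d) ℝ) 1 (-1) 0 * D :
        Matrix (Fin d ⊕ Fin d) (Fin d ⊕ Fin d) ℝ)) a j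
      = Sum.elim (fun k => D (Sum.inr k) j) (fun k => -D (Sum.inl k) j) a := by
    intro a
    cases a with
    | inl k =>
      simp [Matrix.mul_apply, Fintype.sum_sum_type, Matrix.one_apply]
    | inr k =>
      simp [Matrix.mul_apply, Fintype.sum_sum_type, Matrix.one_apply]
  have h2 : ((Dᵀ * Matrix.fromBlocks (0 : Matrix (Fin d) (Fin d) ℝ) 1 (-1) 0 * D :
        Matrix (Fin d ⊕ Fin d) (Fin d ⊕ Fin d) ℝ)) i j
      = (∑ k, D (Sum.inl k) i * D (Sum.inr k) j)
        - ∑ k, D (Sum.inr k) i * D (Sum.inl k) j := by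
    rw [Matrix.mul_assoc, Matrix.mul_apply]
    simp only [Matrix.transpose_apply, h1]
    rw [Fintype.sum_sum_type]
    simp [mul_neg, sub_eq_add_neg]
  have hinner : ∀ u v : EuclideanSpace ℝ (Fin d), ⟪u, v⟫ = ∑ k, u k * v k := by
    intro u v
    simp [PiLp.inner_apply, RCLike.inner_apply, mul_comm]
  have h3 : ((Dᵀ * Matrix.fromBlocks (0 : Matrix (Fin d) (Fin d) ℝ) 1 (-1) 0 * D :
        Matrix (Fin d ⊕ Fin d) (Fin d ⊕ Fin d) ℝ)) i j
      = ⟪A (e i), B (e j)⟫ - ⟪B (e i), A (e j)⟫ := by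
    rw [h2, hinner, hinner]
    congr 1 <;> exact Finset.sum_congr rfl (fun k _ => by rw [hDval, hDval]; rfl)
  rw [h3, key]
  cases i with
  | inl k =>
    cases j with
    | inl l => simp [he]
    | inr l =>
      simp [he, EuclideanSpace.inner_single_left, EuclideanSpace.single_apply,
        Matrix.one_apply, eq_comm]
  | inr k =>
    cases j with
    | inl l =>
      simp [he, EuclideanSpace.inner_single_left, EuclideanSpace.single_apply,
        Matrix.one_apply, eq_comm]
    | inr l => simp [he]
end

section
/- Let d ≥ 1, let H : ℝ^d × ℝ^d → ℝ and σ : ℝ^d × ℝ^d → ℝ be continuously differentiable with σ(q, p) > 0 for all (q, p), let H₀ ∈ ℝ, and define the time-transformed Hamiltonian K(q, p) = σ(q, p)·(H(q, p) − H₀). Suppose (q, p) : ℝ → ℝ^d × ℝ^d is a differentiable curve satisfying Hamilton's equations for K, i.e. q'(τ) = ∇_p K(q(τ), p(τ)) and p'(τ) = −∇_q K(q(τ), p(τ)) for all τ, and suppose H(q(0), p(0)) = H₀. Then H(q(τ), p(τ)) = H₀ for all τ ∈ ℝ; that is, the energy level set {H = H₀} is invariant under the flow of K. -/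
open scoped RealInnerProductSpace

section AuxGrad

open ContinuousLinearMap InnerProductSpace

variable {F : Type*} [NormedAddCommGroup F] [InnerProductSpace ℝ F] [CompleteSpace F]

/-- Gradient in the first factor, expressed via the full derivative. -/
noncomputable def gradFst (f : F × F → ℝ) (x : F × F) : F :=
  (toDual ℝ F).symm ((fderiv ℝ f x).comp (inl ℝ F F))

/-- Gradient in the second factor, expressed via the full derivative. -/
noncomputable def gradSnd (f : F × F → ℝ) (x : F × F) : F :=
  (toDual ℝ F).symm ((fderiv ℝ f x).comp (inr ℝ F F))

lemma inner_gradFst (f : F × F → ℝ) (x : F × F) (u : F) :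
    ⟪gradFst f x, u⟫ = fderiv ℝ f x (u, 0) := by
  rw [gradFst, toDual_symm_apply]; simp

lemma inner_gradSnd (f : F × F → ℝ) (x : F × F) (u : F) :
    ⟪gradSnd f x, u⟫ = fderiv ℝ f x (0, u) := by
  rw [gradSnd, toDual_symm_apply]; simp

lemma continuous_gradFst {f : F × F → ℝ} (hf : ContDiff ℝ 1 f) :
    Continuous (gradFst f) := by
  have h1 : Continuous fun x => fderiv ℝ f x := hf.continuous_fderiv one_ne_zero
  have h2 : Continuous fun x => (fderiv ℝ f x).comp (inl ℝ F F) :=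
    ((compL ℝ F (F × F) ℝ).flip (inl ℝ F F)).continuous.comp h1
  exact (toDual ℝ F).symm.continuous.comp h2

lemma continuous_gradSnd {f : F × F → ℝ} (hf : ContDiff ℝ 1 f) :
    Continuous (gradSnd f) := by
  have h1 : Continuous fun x => fderiv ℝ f x := hf.continuous_fderiv one_ne_zero
  have h2 : Continuous fun x => (fderiv ℝ f x).comp (inr ℝ F F) :=
    ((compL ℝ F (F × F) ℝ).flip (inr ℝ F F)).continuous.comp h1
  exact (toDual ℝ F).symm.continuous.comp h2

end AuxGrad

/-- For the Darboux–Sundman time-transformed Hamiltonian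
`K = σ·(H − H₀)` with `σ > 0`, any solution of Hamilton's equations for `K`
starting on the energy level `H = H₀` stays on it for all fictitious times. -/
theorem time_transformed_flow_preserves_energy_level
    (d : ℕ) (hd : 1 ≤ d)
    (H σ : EuclideanSpace ℝ (Fin d) × EuclideanSpace ℝ (Fin d) → ℝ)
    (hH : ContDiff ℝ 1 H) (hσ : ContDiff ℝ 1 σ)
    (hσpos : ∀ x, 0 < σ x)
    (H₀ : ℝ)
    (K : EuclideanSpace ℝ (Fin d) × EuclideanSpace ℝ (Fin d) → ℝ)
    (hK : ∀ x, K x = σ x * (H x - H₀))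
    (q p : ℝ → EuclideanSpace ℝ (Fin d))
    (hq : ∀ τ : ℝ, HasDerivAt q (gradient (fun y => K (q τ, y)) (p τ)) τ)
    (hp : ∀ τ : ℝ, HasDerivAt p (-gradient (fun x => K (x, p τ)) (q τ)) τ)
    (h0 : H (q 0, p 0) = H₀) :
    ∀ τ : ℝ, H (q τ, p τ) = H₀ := by
  classical
  let X := EuclideanSpace ℝ (Fin d)
  -- the energy defect along the flow
  set E : ℝ → ℝ := fun τ => H (q τ, p τ) - H₀ with hEdef
  -- the coefficient function
  set c : ℝ → ℝ := fun τ =>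
    fderiv ℝ σ (q τ, p τ) (-gradSnd H (q τ, p τ), gradFst H (q τ, p τ)) with hcdef
  -- continuity of the curve
  have hqc : Continuous q := Differentiable.continuous (fun τ => (hq τ).differentiableAt)
  have hpc : Continuous p := Differentiable.continuous (fun τ => (hp τ).differentiableAt)
  have hxc : Continuous (fun τ => (q τ, p τ)) := hqc.prodMk hpc
  have hcc : Continuous c := by
    have h1 : Continuous fun τ => fderiv ℝ σ (q τ, p τ) :=
      (hσ.continuous_fderiv one_ne_zero).comp hxc
    have h2 : Continuous fun τ =>
        ((-gradSnd H (q τ, p τ), gradFst H (q τ, p τ)) : X × X) :=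
      (((continuous_gradSnd hH).comp hxc).neg).prodMk ((continuous_gradFst hH).comp hxc)
    exact isBoundedBilinearMap_apply.continuous.comp (h1.prodMk h2)
  -- the key derivative computation: E' = c * E
  have hE' : ∀ τ, HasDerivAt E (c τ * E τ) τ := by
    intro τ
    have hxd : HasDerivAt (fun t => (q t, p t))
        ((gradient (fun y => K (q τ, y)) (p τ), -gradient (fun z => K (z, p τ)) (q τ)) : X × X)
        τ := (hq τ).prodMk (hp τ)
    have hHd := (hH.differentiable one_ne_zero (q τ, p τ)).hasFDerivAt
    have h1 : HasDerivAt (fun t => H (q t, p t))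
        (fderiv ℝ H (q τ, p τ)
          (gradient (fun y => K (q τ, y)) (p τ), -gradient (fun z => K (z, p τ)) (q τ))) τ :=
      hHd.comp_hasDerivAt τ hxd
    set a := q τ with hadef
    set b := p τ with hbdef
    set DH := fderiv ℝ H (a, b) with hDHdef
    set Dσ := fderiv ℝ σ (a, b) with hDσdef
    set e : ℝ := H (a, b) - H₀ with hedef
    -- partial derivatives of the slices
    have hσp : HasFDerivAt (fun y => σ (a, y)) (Dσ.comp (ContinuousLinearMap.inr ℝ X X)) b :=
      ((hσ.differentiable one_ne_zero (a, b)).hasFDerivAt).comp b (hasFDerivAt_prodMk_right a b)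
    have hHp : HasFDerivAt (fun y => H (a, y)) (DH.comp (ContinuousLinearMap.inr ℝ X X)) b :=
      hHd.comp b (hasFDerivAt_prodMk_right a b)
    have hσq : HasFDerivAt (fun z => σ (z, b)) (Dσ.comp (ContinuousLinearMap.inl ℝ X X)) a :=
      ((hσ.differentiable one_ne_zero (a, b)).hasFDerivAt).comp a (hasFDerivAt_prodMk_left a b)
    have hHq : HasFDerivAt (fun z => H (z, b)) (DH.comp (ContinuousLinearMap.inl ℝ X X)) a :=
      hHd.comp a (hasFDerivAt_prodMk_left a b)
    -- derivative of the slices of K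
    have hKp : HasFDerivAt (fun y => K (a, y))
        (σ (a, b) • (DH.comp (ContinuousLinearMap.inr ℝ X X)) +
          e • (Dσ.comp (ContinuousLinearMap.inr ℝ X X))) b := by
      have h2 := hσp.mul (hHp.sub_const H₀)
      simp only [← hK] at h2
      have hfun : (fun y => K (a, y)) = ((fun y => σ (a, y)) * fun x => H (a, x) - H₀) :=
        funext fun y => hK _
      rw [hfun]
      exact h2
    have hKq : HasFDerivAt (fun z => K (z, b))
        (σ (a, b) • (DH.comp (ContinuousLinearMap.inl ℝ X X)) +
          e • (Dσ.comp (ContinuousLinearMap.inl ℝ X X))) a := by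
      have h2 := hσq.mul (hHq.sub_const H₀)
      simp only [← hK] at h2
      have hfun : (fun z => K (z, b)) = ((fun z => σ (z, b)) * fun x => H (x, b) - H₀) :=
        funext fun y => hK _
      rw [hfun]
      exact h2
    -- inner products against the gradients of the K-slices
    have key_p : ∀ u : X, ⟪gradient (fun y => K (a, y)) b, u⟫ =
        σ (a, b) * DH (0, u) + e * Dσ (0, u) := by
      intro u
      rw [gradient, hKp.fderiv, InnerProductSpace.toDual_symm_apply]
      simp [ContinuousLinearMap.add_apply, ContinuousLinearMap.smul_apply,
        ContinuousLinearMap.comp_apply]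
      rfl
    have key_q : ∀ u : X, ⟪gradient (fun z => K (z, b)) a, u⟫ =
        σ (a, b) * DH (u, 0) + e * Dσ (u, 0) := by
      intro u
      rw [gradient, hKq.fderiv, InnerProductSpace.toDual_symm_apply]
      simp [ContinuousLinearMap.add_apply, ContinuousLinearMap.smul_apply,
        ContinuousLinearMap.comp_apply]
      rfl
    set Gq := gradFst H (a, b) with hGq
    set Gp := gradSnd H (a, b) with hGp
    have hDHGq : ∀ u : X, DH (u, 0) = ⟪Gq, u⟫ := fun u => (inner_gradFst H (a, b) u).symm
    have hDHGp : ∀ u : X, DH (0, u) = ⟪Gp, u⟫ := fun u => (inner_gradSnd H (a, b) u).symm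
    -- compute the total derivative
    have main : DH (gradient (fun y => K (a, y)) b, -gradient (fun z => K (z, b)) a)
        = c τ * E τ := by
      have hsplit : DH (gradient (fun y => K (a, y)) b, -gradient (fun z => K (z, b)) a)
          = DH (gradient (fun y => K (a, y)) b, 0) + DH (0, -gradient (fun z => K (z, b)) a) := by
        rw [← map_add]
        congr 1
        simp
      have t1 : DH (gradient (fun y => K (a, y)) b, 0)
          = σ (a, b) * ⟪Gp, Gq⟫ + e * Dσ (0, Gq) := by
        rw [hDHGq, real_inner_comm, key_p Gq, hDHGp]
      have t2 : DH (0, -gradient (fun z => K (z, b)) a)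
          = -(σ (a, b) * ⟪Gq, Gp⟫ + e * Dσ (Gp, 0)) := by
        rw [hDHGp, inner_neg_right, real_inner_comm, key_q Gp, hDHGq]
      have hc : c τ = Dσ (0, Gq) - Dσ (Gp, 0) := by
        rw [hcdef]
        simp only [← hadef, ← hbdef, ← hGq, ← hGp, ← hDσdef]
        rw [show ((-Gp, Gq) : X × X) = (0, Gq) - (Gp, 0) by simp, map_sub]
      have hE : E τ = e := by rw [hEdef]
      rw [hsplit, t1, t2, hc, hE, real_inner_comm]
      ring
    rw [← main]
    exact h1.sub_const H₀
  -- antiderivative of c and the integrating factor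
  set C : ℝ → ℝ := fun τ => ∫ t in (0:ℝ)..τ, c t with hCdef
  have hC : ∀ τ, HasDerivAt C (c τ) τ := fun τ => (hcc.integral_hasStrictDerivAt 0 τ).hasDerivAt
  set g : ℝ → ℝ := fun τ => E τ * Real.exp (-C τ) with hgdef
  have hg : ∀ τ, HasDerivAt g 0 τ := by
    intro τ
    have h1 := (hE' τ).mul ((hC τ).neg.exp)
    have h2 : HasDerivAt g (c τ * E τ * Real.exp (-C τ) + E τ * (Real.exp (-C τ) * -c τ)) τ := h1
    convert h2 using 1
    ring
  have hgconst : ∀ τ, g τ = g 0 :=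
    fun τ => is_const_of_deriv_eq_zero (fun t => (hg t).differentiableAt) (fun t => (hg t).deriv) τ 0
  intro τ
  have hg0 : g 0 = 0 := by
    simp [hgdef, hEdef, h0]
  have hgτ : E τ * Real.exp (-C τ) = 0 := (hgconst τ).trans hg0
  have hEτ : E τ = 0 := by
    rcases mul_eq_zero.mp hgτ with h | h
    · exact h
    · exact absurd h (Real.exp_ne_zero _)
  have : H (q τ, p τ) - H₀ = 0 := hEτ
  linarith
end

section
/- Let d ≥ 1, let H : ℝ^d × ℝ^d → ℝ and σ : ℝ^d × ℝ^d → ℝ be continuously differentiable with σ(q, p) > 0 for all (q, p), let H₀ ∈ ℝ, and define K(q, p) = σ(q, p)·(H(q, p) − H₀). Suppose (q, p) : ℝ → ℝ^d × ℝ^d is a differentiable curve satisfying Hamilton's equations for K and H(q(0), p(0)) = H₀. Then for all τ ∈ ℝ the curve satisfies the rescaled Hamilton equations of the original system: q'(τ) = σ(q(τ), p(τ)) ∇_p H(q(τ), p(τ)) and p'(τ) = −σ(q(τ), p(τ)) ∇_q H(q(τ), p(τ)). -/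
open scoped RealInnerProductSpace

section Aux

variable {F : Type*} [NormedAddCommGroup F] [InnerProductSpace ℝ F] [CompleteSpace F]

lemma hasGradientAt_of_inner' {f : F → ℝ} {L : F →L[ℝ] ℝ} {a x : F}
    (hL : HasFDerivAt f L x) (h : ∀ v, L v = ⟪a, v⟫) : HasGradientAt f a x := by
  rw [hasGradientAt_iff_hasFDerivAt]
  have hL' : (InnerProductSpace.toDual ℝ F) a = L := by
    refine ContinuousLinearMap.ext fun v => ?_
    simp [InnerProductSpace.toDual_apply_apply, h v]
  rw [hL']; exact hL

lemma hasGradientAt_mul' {f g : F → ℝ} {a b x : F}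
    (hf : HasGradientAt f a x) (hg : HasGradientAt g b x) :
    HasGradientAt (fun y => f y * g y) (f x • b + g x • a) x := by
  refine hasGradientAt_of_inner' (hf.hasFDerivAt.mul hg.hasFDerivAt) fun v => ?_
  simp [InnerProductSpace.toDual_apply_apply, inner_add_left, real_inner_smul_left, mul_comm]

end Aux

/-- A solution of Hamilton's equations for the time-transformed
Hamiltonian `K = σ·(H − H₀)` starting on the level `H = H₀` satisfies the
rescaled Hamilton equations of the original system:
`q' = σ ∇_p H` and `p' = −σ ∇_q H`. -/
theorem time_transformed_flow_satisfies_rescaled_equations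
    (d : ℕ) (hd : 1 ≤ d)
    (H σ : EuclideanSpace ℝ (Fin d) × EuclideanSpace ℝ (Fin d) → ℝ)
    (hH : ContDiff ℝ 1 H) (hσ : ContDiff ℝ 1 σ)
    (hσpos : ∀ x, 0 < σ x)
    (H₀ : ℝ)
    (K : EuclideanSpace ℝ (Fin d) × EuclideanSpace ℝ (Fin d) → ℝ)
    (hK : ∀ x, K x = σ x * (H x - H₀))
    (q p : ℝ → EuclideanSpace ℝ (Fin d))
    (hq : ∀ τ : ℝ, HasDerivAt q (gradient (fun y => K (q τ, y)) (p τ)) τ)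
    (hp : ∀ τ : ℝ, HasDerivAt p (-gradient (fun x => K (x, p τ)) (q τ)) τ)
    (h0 : H (q 0, p 0) = H₀) :
    ∀ τ : ℝ,
      HasDerivAt q
        (σ (q τ, p τ) • gradient (fun y => H (q τ, y)) (p τ)) τ ∧
      HasDerivAt p
        (-(σ (q τ, p τ) • gradient (fun x => H (x, p τ)) (q τ))) τ := by
  have hKfun : K = fun x => σ x * (H x - H₀) := funext hK
  have hKC1 : ContDiff ℝ 1 K := by
    rw [hKfun]; exact hσ.mul (hH.sub contDiff_const)
  have hKdiff : Differentiable ℝ K := hKC1.differentiable one_ne_zero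
  
  -- differentiability of partial maps
  have hdiffp1 : ∀ (f : EuclideanSpace ℝ (Fin d) × EuclideanSpace ℝ (Fin d) → ℝ), Differentiable ℝ f → ∀ a b : EuclideanSpace ℝ (Fin d),
      DifferentiableAt ℝ (fun x => f (x, b)) a := by
    intro f hf a b
    have := (hf (a, b)).comp a ((differentiableAt_id (𝕜 := ℝ) (x := a)).prodMk (differentiableAt_const b))
    simpa [Function.comp_def] using this
  have hdiffp2 : ∀ (f : EuclideanSpace ℝ (Fin d) × EuclideanSpace ℝ (Fin d) → ℝ), Differentiable ℝ f → ∀ a b : EuclideanSpace ℝ (Fin d),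
      DifferentiableAt ℝ (fun y => f (a, y)) b := by
    intro f hf a b
    have := (hf (a, b)).comp b ((differentiableAt_const a).prodMk differentiableAt_id)
    simpa [Function.comp_def] using this
  have hpart1 : ∀ a b : EuclideanSpace ℝ (Fin d), HasGradientAt (fun x => K (x, b))
      (gradient (fun x => K (x, b)) a) a :=
    fun a b => (hdiffp1 K hKdiff a b).hasGradientAt
  have hpart2 : ∀ a b : EuclideanSpace ℝ (Fin d), HasGradientAt (fun y => K (a, y))
      (gradient (fun y => K (a, y)) b) b :=
    fun a b => (hdiffp2 K hKdiff a b).hasGradientAt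
  -- energy conservation: K (q τ, p τ) = 0
  have hEderiv : ∀ τ : ℝ, HasDerivAt (fun τ => K (q τ, p τ)) 0 τ := by
    intro τ
    have hKf : HasFDerivAt K (fderiv ℝ K (q τ, p τ)) (q τ, p τ) := (hKdiff _).hasFDerivAt
    have hc : HasDerivAt (fun t => (q t, p t))
        (gradient (fun y => K (q τ, y)) (p τ), -gradient (fun x => K (x, p τ)) (q τ)) τ :=
      (hq τ).prodMk (hp τ)
    have hcomp := hKf.comp_hasDerivAt τ hc
    have e1 : HasFDerivAt (fun x : EuclideanSpace ℝ (Fin d) => K (x, p τ))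
        ((fderiv ℝ K (q τ, p τ)).comp (ContinuousLinearMap.inl ℝ _ _)) (q τ) := by
      have := hKf.comp (q τ) (hasFDerivAt_prodMk_left (𝕜 := ℝ) (q τ) (p τ))
      simpa [Function.comp_def] using this
    have e2 : HasFDerivAt (fun y : EuclideanSpace ℝ (Fin d) => K (q τ, y))
        ((fderiv ℝ K (q τ, p τ)).comp (ContinuousLinearMap.inr ℝ _ _)) (p τ) := by
      have := hKf.comp (p τ) (hasFDerivAt_prodMk_right (q τ) (p τ))
      simpa [Function.comp_def] using this
    have i1 : ∀ u : EuclideanSpace ℝ (Fin d), fderiv ℝ K (q τ, p τ) (u, 0)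
        = ⟪gradient (fun x => K (x, p τ)) (q τ), u⟫ := by
      intro u
      have h1 := ((hpart1 (q τ) (p τ)).hasFDerivAt.unique e1)
      have h2 := congrFun (congrArg DFunLike.coe h1.symm) u
      simpa [InnerProductSpace.toDual_apply_apply] using h2
    have i2 : ∀ v : EuclideanSpace ℝ (Fin d), fderiv ℝ K (q τ, p τ) (0, v)
        = ⟪gradient (fun y => K (q τ, y)) (p τ), v⟫ := by
      intro v
      have h1 := ((hpart2 (q τ) (p τ)).hasFDerivAt.unique e2)
      have h2 := congrFun (congrArg DFunLike.coe h1.symm) v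
      simpa [InnerProductSpace.toDual_apply_apply] using h2
    have hsplit : ∀ u v : EuclideanSpace ℝ (Fin d), fderiv ℝ K (q τ, p τ) (u, v)
        = fderiv ℝ K (q τ, p τ) (u, 0) + fderiv ℝ K (q τ, p τ) (0, v) := by
      intro u v
      rw [← map_add]
      simp
    have hz : fderiv ℝ K (q τ, p τ)
        (gradient (fun y => K (q τ, y)) (p τ), -gradient (fun x => K (x, p τ)) (q τ)) = 0 := by
      rw [hsplit, i1, i2, inner_neg_right, real_inner_comm]
      ring
    rwa [hz] at hcomp
  have hEconst : ∀ τ : ℝ, K (q τ, p τ) = 0 := by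
    have hconst := is_const_of_deriv_eq_zero
      (f := fun τ => K (q τ, p τ))
      (fun τ => (hEderiv τ).differentiableAt)
      (fun τ => (hEderiv τ).deriv)
    intro τ
    have h2 : K (q τ, p τ) = K (q 0, p 0) := hconst τ 0
    rw [h2, hK, h0]
    ring
  have hH0 : ∀ τ : ℝ, H (q τ, p τ) = H₀ := by
    intro τ
    have h1 := hEconst τ
    rw [hK] at h1
    rcases mul_eq_zero.mp h1 with h | h
    · exact absurd h (ne_of_gt (hσpos _))
    · linarith [sub_eq_zero.mp h]
  intro τ
  have hHdiff := hH.differentiable one_ne_zero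
  have hσdiff := hσ.differentiable one_ne_zero
  have hHp2 : HasGradientAt (fun y => H (q τ, y))
      (gradient (fun y => H (q τ, y)) (p τ)) (p τ) :=
    (hdiffp2 H hHdiff (q τ) (p τ)).hasGradientAt
  have hHp1 : HasGradientAt (fun x => H (x, p τ))
      (gradient (fun x => H (x, p τ)) (q τ)) (q τ) :=
    (hdiffp1 H hHdiff (q τ) (p τ)).hasGradientAt
  have hσp2 : HasGradientAt (fun y => σ (q τ, y))
      (gradient (fun y => σ (q τ, y)) (p τ)) (p τ) :=
    (hdiffp2 σ hσdiff (q τ) (p τ)).hasGradientAt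
  have hσp1 : HasGradientAt (fun x => σ (x, p τ))
      (gradient (fun x => σ (x, p τ)) (q τ)) (q τ) :=
    (hdiffp1 σ hσdiff (q τ) (p τ)).hasGradientAt
  have hsub2 : HasGradientAt (fun y => H (q τ, y) - H₀)
      (gradient (fun y => H (q τ, y)) (p τ)) (p τ) := by
    rw [hasGradientAt_iff_hasFDerivAt]; exact hHp2.hasFDerivAt.sub_const H₀
  have hsub1 : HasGradientAt (fun x => H (x, p τ) - H₀)
      (gradient (fun x => H (x, p τ)) (q τ)) (q τ) := by
    rw [hasGradientAt_iff_hasFDerivAt]; exact hHp1.hasFDerivAt.sub_const H₀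
  have hHab : H (q τ, p τ) - H₀ = 0 := by rw [hH0 τ]; ring
  have hg2 : gradient (fun y => K (q τ, y)) (p τ)
      = σ (q τ, p τ) • gradient (fun y => H (q τ, y)) (p τ) := by
    have hmul := hasGradientAt_mul' hσp2 hsub2
    rw [hKfun]
    exact (by simpa [hHab] using hmul : HasGradientAt
      (fun y => σ (q τ, y) * (H (q τ, y) - H₀))
      (σ (q τ, p τ) • gradient (fun y => H (q τ, y)) (p τ)) (p τ)).gradient
  have hg1 : gradient (fun x => K (x, p τ)) (q τ)
      = σ (q τ, p τ) • gradient (fun x => H (x, p τ)) (q τ) := by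
    have hmul := hasGradientAt_mul' hσp1 hsub1
    rw [hKfun]
    exact (by simpa [hHab] using hmul : HasGradientAt
      (fun x => σ (x, p τ) * (H (x, p τ) - H₀))
      (σ (q τ, p τ) • gradient (fun x => H (x, p τ)) (q τ)) (q τ)).gradient
  exact ⟨hg2 ▸ hq τ, hg1 ▸ hp τ⟩
end
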